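/- Let D be the weighted ADF over V = [0,1] with flat information ordering whose acceptance conditions are given by propositional formulas φ_s containing no constants other than 0 or 1, evaluated by the fuzzy evaluation (C_s(w) = ŵ(φ_s)), and let D' be its classical version: the weighted ADF over V' = {0, 1} with flat information ordering and the same formulas, where evaluation over {0, 1} is the two-valued classical one identifying 1 with true and 0 with false. Let v be a partial interpretation assigning only values in {0, 1, u}, and let s ∈ S. If Γ_D(v)(s) ∈ {0, 1}, then Γ_{D'}(v)(s) ∈ {0, 1}. -/

import Mathlib

/-- Propositional formulas over a set `S` of atoms, with real constants and the
connectives `∧`, `∨`, `¬`. -/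
inductive Fml (S : Type) where
  | atom : S → Fml S
  | const : ℝ → Fml S
  | conj : Fml S → Fml S → Fml S
  | disj : Fml S → Fml S → Fml S
  | neg : Fml S → Fml S

/-- Fuzzy evaluation of a formula under a real-valued assignment of the atoms:
`∧` is min, `∨` is max, `¬` is `1 - ·`, constants evaluate to themselves. -/
def feval {S : Type} (w : S → ℝ) : Fml S → ℝ
  | .atom a => w a
  | .const c => c
  | .conj φ ψ => min (feval w φ) (feval w ψ)
  | .disj φ ψ => max (feval w φ) (feval w ψ)
  | .neg φ => 1 - feval w φ

open scoped Classical in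
/-- Classical two-valued evaluation of a formula under a Boolean assignment of
the atoms (the constant `1` is identified with true, `0` with false). -/
noncomputable def ceval {S : Type} (v : S → Bool) : Fml S → Bool
  | .atom a => v a
  | .const c => if 1 ≤ c then true else false
  | .conj φ ψ => ceval v φ && ceval v ψ
  | .disj φ ψ => ceval v φ || ceval v ψ
  | .neg φ => ! ceval v φ

/-- A formula is constant-free if it contains no constants. -/
def ConstFree {S : Type} : Fml S → Prop
  | .atom _ => True
  | .const _ => False
  | .conj φ ψ => ConstFree φ ∧ ConstFree ψ
  | .disj φ ψ => ConstFree φ ∧ ConstFree ψ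
  | .neg φ => ConstFree φ

/-- Constants occurring in the formula are only `0` or `1`. -/
def ConstZeroOne {S : Type} : Fml S → Prop
  | .atom _ => True
  | .const c => c = 0 ∨ c = 1
  | .conj φ ψ => ConstZeroOne φ ∧ ConstZeroOne ψ
  | .disj φ ψ => ConstZeroOne φ ∧ ConstZeroOne ψ
  | .neg φ => ConstZeroOne φ

/-- Completions, under the flat information ordering on `[0,1] ∪ {u}`
(with `none` playing the role of `u`), of a partial interpretation `v`:
total interpretations into `[0,1]` agreeing with `v` wherever `v` is defined. -/
def FuzzyCompl {S : Type} (v : S → Option ℝ) (w : S → ℝ) : Prop :=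
  (∀ s, w s ∈ Set.Icc (0:ℝ) 1) ∧ ∀ s, ∀ y : ℝ, v s = some y → w s = y

/-- Completions, under the flat information ordering on `{0,1} ∪ {u}`, of a
partial interpretation `v` whose defined values lie in `{0,1}`: total Boolean
interpretations agreeing with `v` wherever `v` is defined (identifying `1` with
true and `0` with false). -/
def BoolCompl {S : Type} (v : S → Option ℝ) (b : S → Bool) : Prop :=
  ∀ s, (v s = some 1 → b s = true) ∧ (v s = some 0 → b s = false)


lemma feval_of_bool {S : Type} (a : S → Bool) (φ : Fml S) (h : ConstZeroOne φ) :
    feval (fun t => if a t then (1:ℝ) else 0) φ = if ceval a φ then 1 else 0 := by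
  induction φ with
  | atom t => simp [feval, ceval]; exact if_congr Iff.rfl rfl rfl
  | const c =>
    rcases h with h | h <;> subst h <;> norm_num [feval, ceval]
  | conj p q ihp ihq =>
    simp only [feval, ceval, ihp h.1, ihq h.2]
    rcases (ceval a p).eq_false_or_eq_true with hp | hp <;>
      rcases (ceval a q).eq_false_or_eq_true with hq | hq <;>
      simp only [hp, hq] <;> norm_num
  | disj p q ihp ihq =>
    simp only [feval, ceval, ihp h.1, ihq h.2]
    rcases (ceval a p).eq_false_or_eq_true with hp | hp <;>
      rcases (ceval a q).eq_false_or_eq_true with hq | hq <;>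
      simp only [hp, hq] <;> norm_num
  | neg p ihp =>
    simp only [feval, ceval, ihp h]
    rcases (ceval a p).eq_false_or_eq_true with hp | hp <;> simp only [hp] <;> norm_num

/-- let `D` be the wADF over `[0,1]` with flat information
ordering whose acceptance conditions are given by fuzzy evaluation of formulas
`φ s` (with constants only `0` or `1`), and `D'` its classical version over
`{0,1}`. For a partial interpretation `v` with values in `{0,1,u}` and a
statement `s`: if `Γ_D(v)(s) ∈ {0,1}` (i.e. all fuzzy completions of `v`
evaluate `φ s` to one and the same value `x ∈ {0,1}`, so that the flat greatest
lower bound is `x`), then `Γ_{D'}(v)(s) ∈ {0,1}` (i.e. all classical completions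
of `v` evaluate `φ s` to one and the same Boolean value). -/
theorem fuzzy_gamma_defined_implies_classical {S : Type} (φ : S → Fml S)
    (hc : ∀ s, ConstZeroOne (φ s))
    (v : S → Option ℝ)
    (hv : ∀ s, v s = none ∨ v s = some 0 ∨ v s = some 1) (s : S) :
    (∃ x : ℝ, (x = 0 ∨ x = 1) ∧
        ∀ w : S → ℝ, FuzzyCompl v w → feval w (φ s) = x) →
    (∃ b : Bool, ∀ a : S → Bool, BoolCompl v a → ceval a (φ s) = b) := by
  rintro ⟨x, hx01, hx⟩
  refine ⟨decide (x = 1), fun a ha => ?_⟩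
  have hfc : FuzzyCompl v (fun t => if a t then (1:ℝ) else 0) := by
    constructor
    · intro t; by_cases h : a t <;> simp [h]
    · intro t y hy
      rcases hv t with h | h | h
      · simp [h] at hy
      · rw [h] at hy; injection hy with hy; subst hy
        simp [(ha t).2 h]
      · rw [h] at hy; injection hy with hy; subst hy
        simp [(ha t).1 h]
  have := hx _ hfc
  rw [feval_of_bool a (φ s) (hc s)] at this
  cases hce : ceval a (φ s) <;> rw [hce] at this <;> simp at this
  · rcases hx01 with h | h
    · simp [← this, h]
    · exfalso; rw [h] at this; norm_num at this
  · simp [this]
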